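/- Let L ⊆ ℝ^n be a linear subspace with basis v_1,…,v_{ℓ₁}, and m_1,…,m_ℓ generators of L^⊥ such that the cone C = {h : ⟨m_r,h⟩ > 0 for all r} is nonempty. Fix ε ∈ ℝ_{>0}^ℓ, 0 < t_0 < 1, and let C_ε = {h : ⟨m_r,h⟩ > ε_r for all r}. Define φ(α,t,h)_j = t^{h_j} Π_k α_k^{v_{k,j}}. Then the image φ(ℝ_{>0}^{ℓ₁} × (0,t_0) × C_ε) equals {γ ∈ ℝ_{>0}^n : γ^{m_r} < t_0^{ε_r} for all r = 1,…,ℓ}. -/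

import Mathlib

theorem phi_image_of_cone {n ℓ ℓ₁ : ℕ}
    (L : Submodule ℝ (Fin n → ℝ))
    (v : Fin ℓ₁ → (Fin n → ℝ))
    (hvli : LinearIndependent ℝ v)
    (hvspan : Submodule.span ℝ (Set.range v) = L)
    (m : Fin ℓ → (Fin n → ℝ))
    (hm : ∀ r, ∀ x ∈ L, ∑ j, m r j * x j = 0)
    (hmgen : ∀ w : Fin n → ℝ, (∀ x ∈ L, ∑ j, w j * x j = 0) →
      w ∈ Submodule.span ℝ (Set.range m))
    (hcone : ∃ h : Fin n → ℝ, ∀ r, 0 < ∑ j, m r j * h j)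
    (ε : Fin ℓ → ℝ) (hε : ∀ r, 0 < ε r)
    (t₀ : ℝ) (ht₀ : 0 < t₀) (ht₀1 : t₀ < 1) :
    ∀ γ : Fin n → ℝ, (∀ j, 0 < γ j) →
      ((∃ α : Fin ℓ₁ → ℝ, ∃ t : ℝ, ∃ h : Fin n → ℝ,
          (∀ k, 0 < α k) ∧ 0 < t ∧ t < t₀ ∧
          (∀ r, ε r < ∑ j, m r j * h j) ∧
          ∀ j, γ j = t ^ h j * ∏ k, α k ^ v k j) ↔
        ∀ r, ∏ j, γ j ^ m r j < t₀ ^ ε r) := by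
  intro γ hγ
  have hlogt₀ : Real.log t₀ < 0 := Real.log_neg ht₀ ht₀1
  have hrw : ∀ r, (∏ j, γ j ^ m r j < t₀ ^ ε r) ↔
      ∑ j, Real.log (γ j) * m r j < Real.log t₀ * ε r := by
    intro r
    have h1 : ∏ j, γ j ^ m r j = Real.exp (∑ j, Real.log (γ j) * m r j) := by
      rw [Real.exp_sum]
      exact Finset.prod_congr rfl fun j _ => Real.rpow_def_of_pos (hγ j) _
    have h2 : t₀ ^ ε r = Real.exp (Real.log t₀ * ε r) := Real.rpow_def_of_pos ht₀ _
    rw [h1, h2, Real.exp_lt_exp]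
  constructor
  · rintro ⟨α, t, h, hα, ht, htt₀, hεh, hγeq⟩ r
    have hlogt : Real.log t < Real.log t₀ := Real.log_lt_log ht htt₀
    have hlogtneg : Real.log t < 0 := hlogt.trans hlogt₀
    have hvL : ∀ k, v k ∈ L := fun k => by
      rw [← hvspan]; exact Submodule.subset_span ⟨k, rfl⟩
    have hlogγ : ∀ j, Real.log (γ j) =
        h j * Real.log t + ∑ k, v k j * Real.log (α k) := by
      intro j
      rw [hγeq j, Real.log_mul (ne_of_gt (Real.rpow_pos_of_pos ht _))
        (ne_of_gt (Finset.prod_pos fun k _ => Real.rpow_pos_of_pos (hα k) _)),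
        Real.log_rpow ht, Real.log_prod
          (fun k _ => ne_of_gt (Real.rpow_pos_of_pos (hα k) _))]
      congr 1
      exact Finset.sum_congr rfl fun k _ => Real.log_rpow (hα k) _
    rw [hrw r]
    have expand : ∑ j, Real.log (γ j) * m r j =
        Real.log t * ∑ j, m r j * h j +
        ∑ k, Real.log (α k) * ∑ j, m r j * v k j := by
      simp only [hlogγ, add_mul, Finset.sum_add_distrib, Finset.mul_sum,
        Finset.sum_mul]
      congr 1
      · exact Finset.sum_congr rfl fun j _ => by ring
      · rw [Finset.sum_comm]
        exact Finset.sum_congr rfl fun k _ =>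
          Finset.sum_congr rfl fun j _ => by ring
    rw [expand]
    have hz : ∑ k, Real.log (α k) * ∑ j, m r j * v k j = 0 := by
      refine Finset.sum_eq_zero fun k _ => ?_
      rw [hm r (v k) (hvL k), mul_zero]
    rw [hz, add_zero]
    calc Real.log t * ∑ j, m r j * h j
        < Real.log t * ε r := by
          exact mul_lt_mul_of_neg_left (hεh r) hlogtneg
      _ < Real.log t₀ * ε r := mul_lt_mul_of_pos_right hlogt (hε r)
  · intro hγr
    have hc : ∀ r, (∑ j, Real.log (γ j) * m r j) / ε r < Real.log t₀ := by
      intro r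
      rw [div_lt_iff₀ (hε r)]
      have := (hrw r).mp (hγr r)
      linarith [this]
    obtain ⟨s, hs1, hs2⟩ : ∃ s : ℝ, s < Real.log t₀ ∧
        ∀ r, (∑ j, Real.log (γ j) * m r j) / ε r < s := by
      rcases isEmpty_or_nonempty (Fin ℓ) with he | he
      · exact ⟨Real.log t₀ - 1, by linarith, fun r => he.elim r⟩
      · set M := Finset.univ.sup' (Finset.univ_nonempty) fun r =>
          (∑ j, Real.log (γ j) * m r j) / ε r with hM
        refine ⟨(M + Real.log t₀) / 2, ?_, ?_⟩
        · have : M < Real.log t₀ := by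
            rw [hM, Finset.sup'_lt_iff]
            exact fun r _ => hc r
          linarith
        · intro r
          have h1 : (∑ j, Real.log (γ j) * m r j) / ε r ≤ M :=
            Finset.le_sup' (fun r => (∑ j, Real.log (γ j) * m r j) / ε r)
              (Finset.mem_univ r)
          have : M < Real.log t₀ := by
            rw [hM, Finset.sup'_lt_iff]
            exact fun r _ => hc r
          linarith
    have hsneg : s < 0 := hs1.trans hlogt₀
    refine ⟨fun _ => 1, Real.exp s, fun j => Real.log (γ j) / s,
      fun _ => one_pos, Real.exp_pos s, ?_, ?_, ?_⟩
    · calc Real.exp s < Real.exp (Real.log t₀) := Real.exp_lt_exp.mpr hs1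
        _ = t₀ := Real.exp_log ht₀
    · intro r
      have : ∑ j, m r j * (Real.log (γ j) / s)
          = (∑ j, Real.log (γ j) * m r j) / s := by
        rw [Finset.sum_div]
        exact Finset.sum_congr rfl fun j _ => by ring
      rw [this]
      rw [lt_div_iff_of_neg hsneg]
      have := hs2 r
      rw [div_lt_iff₀ (hε r)] at this
      linarith
    · intro j
      simp only [Real.one_rpow, Finset.prod_const_one, mul_one]
      rw [← Real.exp_log (hγ j), Real.exp_log (hγ j), Real.rpow_def_of_pos (Real.exp_pos s),
        Real.log_exp, mul_div_cancel₀ _ (ne_of_lt hsneg), Real.exp_log (hγ j)]
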